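/- For every real K ∈ (0,2) with K ≠ 1, the integral ∫₀^∞ (1 − e^{−θ})² θ^{−(1+K)} dθ equals Γ(2−K) · (2^K − 2)/(K(K−1)). -/

import Mathlib

open Set MeasureTheory Real Filter

lemma aux_integrable {s c : ℝ} (hs : 0 < s) (hc : 0 < c) :
    IntegrableOn (fun θ : ℝ => Real.exp (-(c*θ)) * θ ^ (s-1)) (Set.Ioi 0) := by
  have h := integrableOn_rpow_mul_exp_neg_mul_rpow (s := s - 1) (p := 1) (b := c)
    (by linarith) zero_lt_one hc
  apply h.congr_fun (fun x hx => ?_) measurableSet_Ioi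
  simp [Real.rpow_one, mul_comm, neg_mul]

lemma aux_integral {s c : ℝ} (hs : 0 < s) (hc : 0 < c) :
    ∫ θ in Set.Ioi (0:ℝ), Real.exp (-(c*θ)) * θ ^ (s-1) = (1/c)^s * Real.Gamma s := by
  rw [← Real.integral_rpow_mul_exp_neg_mul_Ioi hs hc]
  exact setIntegral_congr_fun measurableSet_Ioi (fun x hx => mul_comm _ _)

lemma B_integrable {K : ℝ} (hK0 : 0 < K) (hK2 : K < 2) :
    IntegrableOn (fun θ : ℝ => (Real.exp (-θ) - Real.exp (-(2*θ))) * θ ^ (-K)) (Set.Ioi 0) := by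
  have hg : IntegrableOn (fun θ : ℝ => Real.exp (-(1*θ)) * θ ^ ((2-K)-1)) (Set.Ioi 0) :=
    aux_integrable (by linarith) one_pos
  apply hg.mono' ?_ ?_
  · apply ContinuousOn.aestronglyMeasurable ?_ measurableSet_Ioi
    apply ContinuousOn.mul (by fun_prop)
    intro x hx
    exact (Real.continuousAt_rpow_const x _ (Or.inl (ne_of_gt hx))).continuousWithinAt
  · filter_upwards [ae_restrict_mem measurableSet_Ioi] with θ (hθ : 0 < θ)
    have he : Real.exp (-θ) - Real.exp (-(2*θ)) = Real.exp (-θ) * (1 - Real.exp (-θ)) := by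
      rw [mul_sub, ← Real.exp_add]; ring_nf
    have h1 : (0:ℝ) ≤ 1 - Real.exp (-θ) := by
      have := Real.exp_le_one_iff.mpr (by linarith : -θ ≤ 0); linarith
    have h2 : 1 - Real.exp (-θ) ≤ θ := by
      have := Real.add_one_le_exp (-θ); linarith
    have hnn : 0 ≤ (Real.exp (-θ) - Real.exp (-(2*θ))) * θ ^ (-K) := by
      rw [he]; positivity
    rw [Real.norm_eq_abs, abs_of_nonneg hnn]
    rw [he, one_mul]
    have : θ ^ ((2-K)-1) = θ * θ ^ (-K) := by
      rw [show (2-K)-1 = 1 + -K by ring, Real.rpow_add hθ, Real.rpow_one]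
    rw [this, mul_assoc]
    apply mul_le_mul_of_nonneg_left ?_ (Real.exp_pos _).le
    exact mul_le_mul_of_nonneg_right h2 (Real.rpow_nonneg hθ.le _)

lemma two_rpow_shift (t : ℝ) : ((1/2):ℝ) ^ t = 2 ^ (-t) := by
  rw [one_div, Real.inv_rpow (by norm_num), ← Real.rpow_neg (by norm_num)]

lemma J_val {K : ℝ} (hK0 : 0 < K) (hK2 : K < 2) (hK1 : K ≠ 1) :
    ∫ θ in Set.Ioi (0:ℝ), (Real.exp (-θ) - Real.exp (-(2*θ))) * θ ^ (-K)
      = Real.Gamma (2-K) * (1 - 2^(K-1)) / (1-K) := by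
  have h2K : (0:ℝ) < 2 - K := by linarith
  have h1K : (1:ℝ) - K ≠ 0 := fun h => hK1 (by linarith)
  have hG : Real.Gamma (2-K) = (1-K) * Real.Gamma (1-K) := by
    rw [show (2:ℝ)-K = (1-K)+1 by ring, Real.Gamma_add_one h1K]
  rcases lt_or_gt_of_ne hK1 with hK | hK
  · -- K < 1 : direct
    have h1 : (0:ℝ) < 1 - K := by linarith
    rw [setIntegral_congr_fun measurableSet_Ioi (g := fun θ : ℝ =>
        Real.exp (-(1*θ)) * θ ^ ((1-K)-1) - Real.exp (-(2*θ)) * θ ^ ((1-K)-1))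
      (fun x hx => by simp only [one_mul, show (1:ℝ)-K-1 = -K by ring]; ring)]
    rw [integral_sub (aux_integrable h1 one_pos) (aux_integrable h1 two_pos),
      aux_integral h1 one_pos, aux_integral h1 two_pos, hG, two_rpow_shift]
    have h2 : (2:ℝ)^(K-1) = 2^(-(1-K)) := by norm_num
    rw [h2]
    have h3 : (2:ℝ)^(-(1-K)) ≠ 0 := (Real.rpow_pos_of_pos two_pos _).ne'
    field_simp
    rw [Real.one_rpow]
  · -- 1 < K : integrate by parts once more
    set u : ℝ → ℝ := fun θ => Real.exp (-θ) - Real.exp (-(2*θ)) with hu_def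
    set u' : ℝ → ℝ := fun θ => -Real.exp (-θ) + 2*Real.exp (-(2*θ)) with hu'_def
    set v : ℝ → ℝ := fun θ => θ^(1-K) / (1-K) with hv_def
    set v' : ℝ → ℝ := fun θ => θ^(-K) with hv'_def
    have hu : ∀ x ∈ Set.Ioi (0:ℝ), HasDerivAt u (u' x) x := by
      intro x _
      have h1 : HasDerivAt (fun θ : ℝ => Real.exp (-θ)) (Real.exp (-x) * (-1)) x :=
        ((hasDerivAt_id x).neg.congr_deriv (by norm_num)).exp.congr_deriv rfl
      have h2 : HasDerivAt (fun θ : ℝ => Real.exp (-(2*θ))) (Real.exp (-(2*x)) * (-2)) x := by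
        have := (((hasDerivAt_id x).const_mul 2).neg).exp
        simpa using this
      have := h1.sub h2
      refine this.congr_deriv ?_
      simp [hu'_def]; ring
    have hv : ∀ x ∈ Set.Ioi (0:ℝ), HasDerivAt v (v' x) x := by
      intro x hx
      have h := (Real.hasDerivAt_rpow_const (p := 1-K) (Or.inl (ne_of_gt hx))).div_const (1-K)
      have heq : (1-K) * x ^ ((1-K)-1) / (1-K) = v' x := by
        rw [mul_div_cancel_left₀ _ h1K, show (1:ℝ)-K-1 = -K by ring]
      exact heq ▸ h
    have huv' : IntegrableOn (fun x => u x * v' x) (Set.Ioi 0) := B_integrable hK0 hK2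
    have hu'v : IntegrableOn (fun x => u' x * v x) (Set.Ioi 0) := by
      have hg : IntegrableOn (fun x : ℝ =>
          (Real.exp (-(2*x)) * x ^ ((2-K)-1) * 2 - Real.exp (-(1*x)) * x ^ ((2-K)-1)) * (1/(1-K)))
          (Set.Ioi 0) :=
        (((aux_integrable h2K two_pos).mul_const 2).sub (aux_integrable h2K one_pos)).mul_const _
      apply hg.congr_fun (fun x hx => ?_) measurableSet_Ioi
      simp only [one_mul, show (2:ℝ)-K-1 = 1-K by ring, hu'_def, hv_def]
      ring
    have h_zero : Filter.Tendsto (u * v) (nhdsWithin 0 (Set.Ioi 0)) (nhds 0) := by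
      have hbnd : ∀ᶠ θ in nhdsWithin (0:ℝ) (Set.Ioi 0),
          ‖(u * v) θ‖ ≤ θ ^ (2-K) / (K-1) := by
        filter_upwards [self_mem_nhdsWithin] with θ (hθ : (0:ℝ) < θ)
        have h1 : (0:ℝ) ≤ 1 - Real.exp (-θ) := by
          have := Real.exp_le_one_iff.mpr (by linarith : -θ ≤ 0); linarith
        have h2 : 1 - Real.exp (-θ) ≤ θ := by
          have := Real.add_one_le_exp (-θ); linarith
        have he : u θ = Real.exp (-θ) * (1 - Real.exp (-θ)) := by
          simp only [hu_def]; rw [mul_sub, ← Real.exp_add]; ring_nf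
        have hun : 0 ≤ u θ := by rw [he]; positivity
        have hub : u θ ≤ θ := by
          rw [he]
          calc Real.exp (-θ) * (1 - Real.exp (-θ)) ≤ 1 * θ := by
                apply mul_le_mul (Real.exp_le_one_iff.mpr (by linarith)) h2 h1 zero_le_one
            _ = θ := one_mul θ
        show ‖u θ * v θ‖ ≤ θ ^ (2-K) / (K-1)
        have hK1' : K - 1 ≠ 0 := fun h => hK1 (by linarith)
        have key : ∀ a b : ℝ, a * (b/(1-K)) = -(a*b/(K-1)) := by
          intro a b; field_simp; ring
        show ‖u θ * (θ ^ (1-K) / (1-K))‖ ≤ θ ^ (2-K) / (K-1)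
        rw [key, norm_neg, Real.norm_eq_abs,
          abs_of_nonneg (div_nonneg (mul_nonneg hun (Real.rpow_nonneg hθ.le _)) (by linarith))]
        rw [div_le_div_iff_of_pos_right (by linarith : (0:ℝ) < K-1)]
        calc u θ * θ ^ (1-K) ≤ θ * θ ^ (1-K) :=
              mul_le_mul_of_nonneg_right hub (Real.rpow_nonneg hθ.le _)
          _ = θ ^ (2-K) := by
              rw [show (2:ℝ)-K = 1 + (1-K) by ring, Real.rpow_add hθ, Real.rpow_one]
      have htend : Filter.Tendsto (fun x : ℝ => x ^ (2-K) / (K-1))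
          (nhdsWithin 0 (Set.Ioi 0)) (nhds 0) := by
        have hc := (Real.continuousAt_rpow_const 0 (2-K) (Or.inr h2K.le)).tendsto
        rw [Real.zero_rpow h2K.ne'] at hc
        have hm : Filter.Tendsto (fun x : ℝ => x ^ (2-K)) (nhdsWithin 0 (Set.Ioi 0)) (nhds 0) :=
          hc.mono_left nhdsWithin_le_nhds
        have := hm.div_const (K-1)
        simpa using this
      exact squeeze_zero_norm' hbnd htend
    have h_infty : Filter.Tendsto (u * v) Filter.atTop (nhds 0) := by
      have hu0 : Filter.Tendsto u Filter.atTop (nhds 0) := by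
        have h1 : Filter.Tendsto (fun x : ℝ => Real.exp (-x)) Filter.atTop (nhds 0) :=
          Real.tendsto_exp_neg_atTop_nhds_zero
        have h2 : Filter.Tendsto (fun x : ℝ => Real.exp (-(2*x))) Filter.atTop (nhds 0) := by
          apply h1.comp
          exact Filter.tendsto_id.const_mul_atTop two_pos
        simpa using h1.sub h2
      have hv0 : Filter.Tendsto v Filter.atTop (nhds 0) := by
        have : Filter.Tendsto (fun x : ℝ => x ^ (1-K)) Filter.atTop (nhds 0) := by
          rw [show (1:ℝ)-K = -(K-1) by ring]
          exact tendsto_rpow_neg_atTop (by linarith)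
        have h3 := this.div_const (1-K)
        simpa using h3
      simpa [Pi.mul_def] using hu0.mul hv0
    have hibp := MeasureTheory.integral_Ioi_mul_deriv_eq_deriv_mul hu hv huv' hu'v h_zero h_infty
    have hJ2 : ∫ x in Set.Ioi (0:ℝ), u' x * v x
        = ((1/2)^(2-K) * Real.Gamma (2-K) * 2 - Real.Gamma (2-K)) * (1/(1-K)) := by
      rw [setIntegral_congr_fun measurableSet_Ioi (g := fun x : ℝ =>
          (Real.exp (-(2*x)) * x ^ ((2-K)-1) * 2 - Real.exp (-(1*x)) * x ^ ((2-K)-1)) * (1/(1-K)))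
        (fun x hx => by
          simp only [one_mul, show (2:ℝ)-K-1 = 1-K by ring, hu'_def, hv_def]; ring)]
      rw [MeasureTheory.integral_mul_const, MeasureTheory.integral_sub
        ((aux_integrable h2K two_pos).mul_const 2) (aux_integrable h2K one_pos),
        MeasureTheory.integral_mul_const, aux_integral h2K two_pos, aux_integral h2K one_pos]
      norm_num
    rw [show (fun x : ℝ => (Real.exp (-x) - Real.exp (-(2*x))) * x ^ (-K))
        = fun x => u x * v' x from rfl] at *
    rw [hibp, hJ2, two_rpow_shift]
    have he1 : (2:ℝ)^(-(2-K)) * 2 = 2^(K-1) :=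
      calc (2:ℝ)^(-(2-K)) * 2 = 2^(-(2-K)) * 2^(1:ℝ) := by rw [Real.rpow_one]
        _ = 2^(-(2-K)+1) := (Real.rpow_add two_pos _ _).symm
        _ = 2^(K-1) := by ring_nf
    rw [← he1]
    field_simp
    ring

lemma cont_aux {K : ℝ} (s : Set ℝ) (hs : s ⊆ Set.Ioi 0) (hm : MeasurableSet s) :
    AEStronglyMeasurable (fun θ : ℝ => (1 - Real.exp (-θ))^2 * θ ^ (-(1+K)))
      (MeasureTheory.volume.restrict s) := by
  apply ContinuousOn.aestronglyMeasurable ?_ hm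
  apply ContinuousOn.mul (by fun_prop)
  intro x hx
  exact (Real.continuousAt_rpow_const x _ (Or.inl (ne_of_gt (hs hx)))).continuousWithinAt

lemma exp_bounds {θ : ℝ} (hθ : 0 < θ) :
    0 ≤ 1 - Real.exp (-θ) ∧ 1 - Real.exp (-θ) ≤ θ ∧ 1 - Real.exp (-θ) ≤ 1 := by
  have h1 := Real.exp_le_one_iff.mpr (by linarith : -θ ≤ 0)
  have h2 := Real.add_one_le_exp (-θ)
  have h3 := Real.exp_pos (-θ)
  exact ⟨by linarith, by linarith, by linarith⟩

lemma A_integrable {K : ℝ} (hK0 : 0 < K) (hK2 : K < 2) :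
    IntegrableOn (fun θ : ℝ => (1 - Real.exp (-θ))^2 * θ ^ (-(1+K))) (Set.Ioi 0) := by
  rw [show Set.Ioi (0:ℝ) = Set.Ioc 0 1 ∪ Set.Ioi 1 from (Set.Ioc_union_Ioi_eq_Ioi zero_le_one).symm]
  apply MeasureTheory.IntegrableOn.union
  · have hg : IntegrableOn (fun θ : ℝ => θ ^ (1-K)) (Set.Ioc (0:ℝ) 1) := by
      have h := intervalIntegral.intervalIntegrable_rpow' (a := (0:ℝ)) (b := 1)
        (by linarith : (-1:ℝ) < 1-K)
      rwa [intervalIntegrable_iff_integrableOn_Ioc_of_le zero_le_one] at h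
    apply hg.mono' (cont_aux _ (fun x hx => hx.1) measurableSet_Ioc)
    filter_upwards [ae_restrict_mem measurableSet_Ioc] with θ hθ
    obtain ⟨h1, h2, _⟩ := exp_bounds hθ.1
    have hnn : (0:ℝ) ≤ (1 - Real.exp (-θ))^2 * θ ^ (-(1+K)) :=
      mul_nonneg (sq_nonneg _) (Real.rpow_nonneg hθ.1.le _)
    rw [Real.norm_eq_abs, abs_of_nonneg hnn,
      show (1:ℝ)-K = ((2:ℕ):ℝ) + (-(1+K)) by push_cast; ring,
      Real.rpow_add hθ.1, Real.rpow_natCast]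
    exact mul_le_mul_of_nonneg_right (pow_le_pow_left₀ h1 h2 2)
      (Real.rpow_nonneg hθ.1.le _)
  · have hg : IntegrableOn (fun θ : ℝ => θ ^ (-(1+K))) (Set.Ioi (1:ℝ)) :=
      integrableOn_Ioi_rpow_of_lt (by linarith) zero_lt_one
    apply hg.mono' (cont_aux _ (fun x hx => Set.mem_Ioi.mpr (lt_trans zero_lt_one hx)) measurableSet_Ioi)
    filter_upwards [ae_restrict_mem measurableSet_Ioi] with θ (hθ : 1 < θ)
    have hθ0 : (0:ℝ) < θ := lt_trans zero_lt_one hθ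
    obtain ⟨h1, _, h3⟩ := exp_bounds hθ0
    have hnn : (0:ℝ) ≤ (1 - Real.exp (-θ))^2 * θ ^ (-(1+K)) :=
      mul_nonneg (sq_nonneg _) (Real.rpow_nonneg hθ0.le _)
    rw [Real.norm_eq_abs, abs_of_nonneg hnn]
    nth_rewrite 2 [show θ ^ (-(1+K)) = 1 * θ ^ (-(1+K)) from (one_mul _).symm]
    exact mul_le_mul_of_nonneg_right (by nlinarith) (Real.rpow_nonneg hθ0.le _)

theorem stmt_4 (K : ℝ) (hK0 : 0 < K) (hK2 : K < 2) (hK1 : K ≠ 1) :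
    ∫ θ in Set.Ioi (0:ℝ), (1 - Real.exp (-θ)) ^ 2 * θ ^ (-(1 + K))
      = Real.Gamma (2 - K) * (((2:ℝ) ^ K - 2) / (K * (K - 1))) := by
  have hKne : K ≠ 0 := hK0.ne'
  have hK1' : K - 1 ≠ 0 := fun h => hK1 (by linarith)
  have h1K : (1:ℝ) - K ≠ 0 := fun h => hK1 (by linarith)
  set u : ℝ → ℝ := fun θ => (1 - Real.exp (-θ))^2 with hu_def
  set u' : ℝ → ℝ := fun θ => 2 * Real.exp (-θ) * (1 - Real.exp (-θ)) with hu'_def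
  set v : ℝ → ℝ := fun θ => θ^(-K) / (-K) with hv_def
  set v' : ℝ → ℝ := fun θ => θ^(-(1+K)) with hv'_def
  have hu : ∀ x ∈ Set.Ioi (0:ℝ), HasDerivAt u (u' x) x := by
    intro x _
    have hexp : HasDerivAt (fun θ : ℝ => Real.exp (-θ)) (Real.exp (-x) * (-1)) x :=
      ((hasDerivAt_id x).neg.congr_deriv (by norm_num)).exp.congr_deriv rfl
    have h := ((hasDerivAt_const x (1:ℝ)).sub hexp).pow 2
    refine h.congr_deriv ?_
    simp [hu'_def]; ring
  have hv : ∀ x ∈ Set.Ioi (0:ℝ), HasDerivAt v (v' x) x := by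
    intro x hx
    have h := (Real.hasDerivAt_rpow_const (p := -K) (Or.inl (ne_of_gt hx))).div_const (-K)
    have heq : -K * x ^ (-K-1) / (-K) = v' x := by
      rw [mul_div_cancel_left₀ _ (neg_ne_zero.mpr hKne), show -K-1 = -(1+K) by ring]
    exact heq ▸ h
  have huv' : IntegrableOn (fun x => u x * v' x) (Set.Ioi 0) := A_integrable hK0 hK2
  have hu'v : IntegrableOn (fun x => u' x * v x) (Set.Ioi 0) := by
    have hg : IntegrableOn
        (fun x : ℝ => (Real.exp (-x) - Real.exp (-(2*x))) * x ^ (-K) * (-2/K)) (Set.Ioi 0) :=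
      (B_integrable hK0 hK2).mul_const (-2/K)
    apply hg.congr_fun (fun x hx => ?_) measurableSet_Ioi
    simp only [hu'_def, hv_def]
    rw [show -(2*x) = -x + -x by ring, Real.exp_add, div_neg]
    ring
  have h_zero : Filter.Tendsto (u * v) (nhdsWithin 0 (Set.Ioi 0)) (nhds 0) := by
    have hbnd : ∀ᶠ θ in nhdsWithin (0:ℝ) (Set.Ioi 0), ‖(u * v) θ‖ ≤ θ ^ (2-K) / K := by
      filter_upwards [self_mem_nhdsWithin] with θ (hθ : (0:ℝ) < θ)
      obtain ⟨h1, h2, _⟩ := exp_bounds hθ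
      have key : ∀ a b : ℝ, a * (b/(-K)) = -(a*b/K) := by
        intro a b; rw [div_neg, mul_neg, mul_div_assoc]
      show ‖u θ * (θ ^ (-K) / (-K))‖ ≤ θ ^ (2-K) / K
      have hun : 0 ≤ u θ := by show (0:ℝ) ≤ (1 - Real.exp (-θ))^2; positivity
      rw [key, norm_neg, Real.norm_eq_abs,
        abs_of_nonneg (div_nonneg (mul_nonneg hun (Real.rpow_nonneg hθ.le _)) hK0.le)]
      rw [div_le_div_iff_of_pos_right hK0]
      calc u θ * θ ^ (-K) ≤ θ^2 * θ ^ (-K) :=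
            mul_le_mul_of_nonneg_right (pow_le_pow_left₀ h1 h2 2) (Real.rpow_nonneg hθ.le _)
        _ = θ ^ (2-K) := by
            rw [show (2:ℝ)-K = ((2:ℕ):ℝ) + (-K) by push_cast; ring,
              Real.rpow_add hθ, Real.rpow_natCast]
    have htend : Filter.Tendsto (fun x : ℝ => x ^ (2-K) / K)
        (nhdsWithin 0 (Set.Ioi 0)) (nhds 0) := by
      have hc := (Real.continuousAt_rpow_const 0 (2-K) (Or.inr (by linarith))).tendsto
      rw [Real.zero_rpow (by linarith : (2:ℝ)-K ≠ 0)] at hc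
      have hm : Filter.Tendsto (fun x : ℝ => x ^ (2-K)) (nhdsWithin 0 (Set.Ioi 0)) (nhds 0) :=
        hc.mono_left nhdsWithin_le_nhds
      have := hm.div_const K
      simpa using this
    exact squeeze_zero_norm' hbnd htend
  have h_infty : Filter.Tendsto (u * v) Filter.atTop (nhds 0) := by
    have hu1 : Filter.Tendsto u Filter.atTop (nhds 1) := by
      have := (tendsto_const_nhds (x := (1:ℝ)) (f := Filter.atTop)).sub
        Real.tendsto_exp_neg_atTop_nhds_zero
      have hp := this.pow 2
      simpa using hp
    have hv0 : Filter.Tendsto v Filter.atTop (nhds 0) := by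
      have := (tendsto_rpow_neg_atTop hK0).div_const (-K)
      simpa using this
    have := hu1.mul hv0
    simpa [Pi.mul_def] using this
  have hibp := MeasureTheory.integral_Ioi_mul_deriv_eq_deriv_mul hu hv huv' hu'v h_zero h_infty
  have hJ : ∫ x in Set.Ioi (0:ℝ), u' x * v x
      = (Real.Gamma (2-K) * (1 - 2^(K-1)) / (1-K)) * (-2/K) := by
    rw [setIntegral_congr_fun measurableSet_Ioi (g := fun x : ℝ =>
        (Real.exp (-x) - Real.exp (-(2*x))) * x ^ (-K) * (-2/K))
      (fun x hx => by
        simp only [hu'_def, hv_def]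
        rw [show -(2*x) = -x + -x by ring, Real.exp_add, div_neg]
        ring)]
    rw [MeasureTheory.integral_mul_const, J_val hK0 hK2 hK1]
  have hmain : ∫ θ in Set.Ioi (0:ℝ), (1 - Real.exp (-θ)) ^ 2 * θ ^ (-(1 + K))
      = ∫ x in Set.Ioi (0:ℝ), u x * v' x := rfl
  rw [hmain, hibp, hJ]
  have he1 : (2:ℝ)^(K-1) * 2 = 2^K :=
    calc (2:ℝ)^(K-1) * 2 = 2^(K-1) * 2^(1:ℝ) := by rw [Real.rpow_one]
      _ = 2^(K-1+1) := (Real.rpow_add two_pos _ _).symm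
      _ = 2^K := by ring_nf
  rw [← he1]
  field_simp
  ring
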